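/- Let p(λ) = ∫₀^∞ e^{−x} ∏_{i=1}^∞ (1 − e^{−x−λi})² dx for λ > 0. Then lim_{λ → 0⁺} p(λ)/λ = 1/2. -/

import Mathlib

open Real Filter MeasureTheory Set Topology

private lemma log_one_sub_le {s : ℝ} (h1 : s < 1) : Real.log (1 - s) ≤ -s := by
  have := Real.log_le_sub_one_of_pos (show (0:ℝ) < 1 - s by linarith)
  linarith

private lemma le_log_one_sub {s : ℝ} (h0 : 0 ≤ s) (h1 : s < 1) :
    -(s / (1 - s)) ≤ Real.log (1 - s) := by
  have hs : (0:ℝ) < 1 - s := by linarith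
  have h := Real.log_le_sub_one_of_pos (show (0:ℝ) < (1 - s)⁻¹ by positivity)
  rw [Real.log_inv] at h
  have : (1 - s)⁻¹ - 1 = s / (1 - s) := by field_simp; ring
  linarith [this ▸ h]

private lemma geom_hasSum {q : ℝ} (hq0 : 0 ≤ q) (hq1 : q < 1) :
    HasSum (fun i : ℕ => q ^ (i + 1)) (q / (1 - q)) := by
  have h := (hasSum_geometric_of_lt_one hq0 hq1).mul_left q
  have e1 : (fun i : ℕ => q * q ^ i) = fun i : ℕ => q ^ (i + 1) := by
    funext i; rw [pow_succ]; ring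
  have e2 : q * (1 - q)⁻¹ = q / (1 - q) := by rw [div_eq_mul_inv]
  rwa [e1, e2] at h

private lemma pow_succ_le {q : ℝ} (hq0 : 0 ≤ q) (hq1 : q ≤ 1) (i : ℕ) : q ^ (i + 1) ≤ q := by
  have h := pow_le_one₀ hq0 hq1 (n := i)
  have hp : 0 ≤ q ^ i := by positivity
  calc q ^ (i + 1) = q ^ i * q := by rw [pow_succ]
  _ ≤ 1 * q := by nlinarith
  _ = q := one_mul q

private lemma s_bounds {t q : ℝ} (ht0 : 0 < t) (ht1 : t ≤ 1) (hq0 : 0 < q) (hq1 : q < 1)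
    (i : ℕ) : 0 < t * q ^ (i + 1) ∧ t * q ^ (i + 1) ≤ q ^ (i + 1) ∧ t * q ^ (i + 1) < 1 := by
  have hp : 0 < q ^ (i + 1) := by positivity
  have hle : t * q ^ (i + 1) ≤ q ^ (i + 1) := by nlinarith
  have hql : q ^ (i + 1) ≤ q := pow_succ_le hq0.le hq1.le i
  exact ⟨by positivity, hle, by linarith⟩

private lemma log_hasSum {t q : ℝ} (ht0 : 0 < t) (ht1 : t ≤ 1) (hq0 : 0 < q) (hq1 : q < 1) :
    ∃ S : ℝ, HasSum (fun i : ℕ => Real.log (1 - t * q ^ (i + 1))) S ∧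
      HasProd (fun i : ℕ => (1 - t * q ^ (i + 1)) ^ 2) (Real.exp S ^ 2) ∧
      S ≤ -(t * (q / (1 - q))) ∧ S ≤ 0 := by
  set f : ℕ → ℝ := fun i => Real.log (1 - t * q ^ (i + 1)) with hf
  have hsb := fun i => s_bounds ht0 ht1 hq0 hq1 i
  have hfpos : ∀ i, 0 < 1 - t * q ^ (i + 1) := fun i => by linarith [(hsb i).2.2]
  have hfle : ∀ i, f i ≤ -(t * q ^ (i + 1)) := fun i => log_one_sub_le (hsb i).2.2
  have h1q : (0:ℝ) < 1 - q := by linarith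
  have hflb : ∀ i, -(q ^ (i + 1) / (1 - q)) ≤ f i := by
    intro i
    refine le_trans ?_ (le_log_one_sub (hsb i).1.le (hsb i).2.2)
    have h1s : (0:ℝ) < 1 - t * q ^ (i + 1) := hfpos i
    have hd : t * q ^ (i + 1) / (1 - t * q ^ (i + 1)) ≤ q ^ (i + 1) / (1 - q) := by
      rw [div_le_div_iff₀ h1s h1q]
      have h2 : q ^ (i + 1) ≤ q := pow_succ_le hq0.le hq1.le i
      nlinarith [(hsb i).1, (hsb i).2.1, pow_pos hq0 (i + 1)]
    linarith
  have hg : Summable (fun i : ℕ => q ^ (i + 1) / (1 - q)) :=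
    (geom_hasSum hq0.le hq1).summable.div_const _
  have hsummable : Summable f := by
    rw [← summable_neg_iff]
    refine Summable.of_nonneg_of_le (fun i => ?_) (fun i => ?_) hg
    · have : f i ≤ 0 := by
        have := hfle i
        nlinarith [(hsb i).1]
      linarith
    · linarith [hflb i]
  refine ⟨∑' i, f i, hsummable.hasSum, ?_, ?_, ?_⟩
  · have hp := hsummable.hasSum.rexp
    have he : (rexp ∘ f) = fun i => 1 - t * q ^ (i + 1) := by
      funext i; exact Real.exp_log (hfpos i)
    rw [he] at hp
    have := hp.mul hp
    have e2 : (fun i : ℕ => (1 - t * q ^ (i + 1)) * (1 - t * q ^ (i + 1)))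
        = fun i : ℕ => (1 - t * q ^ (i + 1)) ^ 2 := by funext i; ring
    rw [e2] at this
    have e3 : rexp (∑' i, f i) * rexp (∑' i, f i) = rexp (∑' i, f i) ^ 2 := by ring
    rwa [e3] at this
  · have hneg : HasSum (fun i : ℕ => -(t * q ^ (i + 1))) (-(t * (q / (1 - q)))) :=
      ((geom_hasSum hq0.le hq1).mul_left t).neg
    exact hasSum_le hfle hsummable.hasSum hneg
  · refine hasSum_le (fun i => ?_) hsummable.hasSum hasSum_zero
    have := hfle i
    nlinarith [(hsb i).1]

private lemma log_tsum_lower {t q δ : ℝ} (ht0 : 0 < t) (htδ : t ≤ δ) (hδ : δ ≤ 1/2)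
    (hδ0 : 0 < δ) (hq0 : 0 < q) (hq1 : q < 1) {S : ℝ}
    (hS : HasSum (fun i : ℕ => Real.log (1 - t * q ^ (i + 1))) S) :
    -((1 + 2*δ) * (t * (q / (1 - q)))) ≤ S := by
  have ht1 : t ≤ 1 := by linarith
  have hsb := fun i => s_bounds ht0 ht1 hq0 hq1 i
  have hlhs : HasSum (fun i : ℕ => -((1 + 2*δ) * (t * q ^ (i + 1))))
      (-((1 + 2*δ) * (t * (q / (1 - q))))) :=
    (((geom_hasSum hq0.le hq1).mul_left t).mul_left (1 + 2*δ)).neg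
  refine hasSum_le (fun i => ?_) hlhs hS
  set s := t * q ^ (i + 1) with hs
  have hs0 : 0 < s := (hsb i).1
  have hs1 : s < 1 := (hsb i).2.2
  have hsδ : s ≤ δ := by
    have : q ^ (i + 1) ≤ 1 := by
      have := pow_succ_le hq0.le hq1.le i
      linarith
    nlinarith
  refine le_trans ?_ (le_log_one_sub hs0.le hs1)
  have key : s / (1 - s) ≤ (1 + 2*δ) * s := by
    rw [div_le_iff₀ (by linarith : (0:ℝ) < 1 - s)]
    have h1 : 0 ≤ 2*δ - s*(1+2*δ) := by nlinarith [mul_le_mul_of_nonneg_right hsδ (by linarith : (0:ℝ) ≤ 1 + 2*δ)]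
    nlinarith [mul_nonneg hs0.le h1]
  rw [hs] at key ⊢
  linarith

/-- The exact exponential integral. -/
private lemma integral_exp_exp {c : ℝ} (hc : 0 < c) (L : ℝ) :
    IntegrableOn (fun x => Real.exp (-x) * Real.exp (-(c * Real.exp (-x)))) (Ioi L) ∧
    ∫ x in Ioi L, Real.exp (-x) * Real.exp (-(c * Real.exp (-x)))
      = (1 - Real.exp (-(c * Real.exp (-L)))) / c := by
  set g : ℝ → ℝ := fun x => Real.exp (-(c * Real.exp (-x))) / c with hg
  have hderiv : ∀ x ∈ Ici L, HasDerivAt g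
      (Real.exp (-x) * Real.exp (-(c * Real.exp (-x)))) x := by
    intro x _
    have h1 : HasDerivAt (fun x : ℝ => -x) (-1) x := (hasDerivAt_id x).neg
    have h2 := h1.exp
    have h3 := (h2.const_mul (-c)).exp
    have h4 := h3.div_const c
    convert h4 using 1
    · rfl
    · rfl
    · funext y; simp [hg, neg_mul, mul_comm]
    · rw [show -c * rexp (-x) = -(c * rexp (-x)) from neg_mul c _]
      field_simp
  have hpos : ∀ x ∈ Ioi L, 0 ≤ Real.exp (-x) * Real.exp (-(c * Real.exp (-x))) := by
    intro x _; positivity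
  have htend : Tendsto g atTop (𝓝 (1 / c)) := by
    have h0 : Tendsto (fun x : ℝ => Real.exp (-x)) atTop (𝓝 0) :=
      Real.tendsto_exp_neg_atTop_nhds_zero
    have hcont : Continuous (fun t : ℝ => Real.exp (-(c * t)) / c) := by continuity
    have := (hcont.tendsto 0).comp h0
    simpa [hg, Function.comp_def] using this
  refine ⟨integrableOn_Ioi_deriv_of_nonneg' hderiv hpos htend, ?_⟩
  rw [integral_Ioi_of_hasDerivAt_of_nonneg' hderiv hpos htend]
  simp [hg]
  ring

private lemma factor_eq (l x : ℝ) (i : ℕ) :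
    Real.exp (-x - l * ((i:ℝ) + 1)) = Real.exp (-x) * Real.exp (-l) ^ (i + 1) := by
  rw [← Real.exp_nat_mul, ← Real.exp_add]
  congr 1
  push_cast
  ring

private lemma point_facts {l x : ℝ} (hl : 0 < l) (hx : 0 < x) :
    ∃ S : ℝ,
      HasSum (fun i : ℕ => Real.log (1 - Real.exp (-x) * Real.exp (-l) ^ (i + 1))) S ∧
      HasProd (fun i : ℕ => (1 - Real.exp (-x - l * ((i:ℝ) + 1))) ^ 2) (Real.exp S ^ 2) ∧
      S ≤ -(Real.exp (-x) * (Real.exp (-l) / (1 - Real.exp (-l)))) ∧ S ≤ 0 := by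
  have ht0 : 0 < Real.exp (-x) := Real.exp_pos _
  have ht1 : Real.exp (-x) ≤ 1 := by
    rw [Real.exp_le_one_iff]
    linarith
  have hq0 : 0 < Real.exp (-l) := Real.exp_pos _
  have hq1 : Real.exp (-l) < 1 := by
    rw [Real.exp_lt_one_iff]
    linarith
  obtain ⟨S, h1, h2, h3, h4⟩ := log_hasSum ht0 ht1 hq0 hq1
  refine ⟨S, h1, ?_, h3, h4⟩
  have he : (fun i : ℕ => (1 - Real.exp (-x) * Real.exp (-l) ^ (i + 1)) ^ 2)
      = fun i : ℕ => (1 - Real.exp (-x - l * ((i:ℝ) + 1))) ^ 2 := by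
    funext i; rw [factor_eq]
  rwa [he] at h2

private lemma F_aesm {l : ℝ} (hl : 0 < l) :
    AEStronglyMeasurable
      (fun x => Real.exp (-x) * ∏' i : ℕ, (1 - Real.exp (-x - l * ((i:ℝ) + 1))) ^ 2)
      (volume.restrict (Ioi 0)) := by
  apply aestronglyMeasurable_of_tendsto_ae (u := atTop)
    (f := fun n x => Real.exp (-x) * ∏ i ∈ Finset.range n,
      (1 - Real.exp (-x - l * ((i:ℝ) + 1))) ^ 2)
  · intro n
    apply Continuous.aestronglyMeasurable
    apply Continuous.mul (by continuity)
    apply continuous_finset_prod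
    intro i _
    continuity
  · filter_upwards [ae_restrict_mem measurableSet_Ioi] with x hx
    obtain ⟨S, _, hP, _, _⟩ := point_facts hl hx
    rw [hP.tprod_eq]
    exact (hP.tendsto_prod_nat).const_mul (Real.exp (-x))

private lemma F_le_one_sided {l x : ℝ} (hl : 0 < l) (hx : 0 < x) :
    Real.exp (-x) * ∏' i : ℕ, (1 - Real.exp (-x - l * ((i:ℝ) + 1))) ^ 2 ≤ Real.exp (-x)
    ∧ 0 ≤ Real.exp (-x) * ∏' i : ℕ, (1 - Real.exp (-x - l * ((i:ℝ) + 1))) ^ 2 := by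
  obtain ⟨S, _, hP, _, hS0⟩ := point_facts hl hx
  rw [hP.tprod_eq]
  have h1 : Real.exp S ≤ 1 := Real.exp_le_one_iff.2 hS0
  have h2 : 0 < Real.exp S := Real.exp_pos _
  have h3 : 0 < Real.exp (-x) := Real.exp_pos _
  have h4 : Real.exp S ^ 2 ≤ 1 := pow_le_one₀ h2.le h1
  constructor
  · nlinarith
  · positivity

private lemma F_integrableOn {l : ℝ} (hl : 0 < l) :
    IntegrableOn
      (fun x => Real.exp (-x) * ∏' i : ℕ, (1 - Real.exp (-x - l * ((i:ℝ) + 1))) ^ 2)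
      (Ioi 0) := by
  have hexp : IntegrableOn (fun x : ℝ => Real.exp (-x)) (Ioi 0) := by
    have := exp_neg_integrableOn_Ioi 0 (by norm_num : (0:ℝ) < 1)
    simpa using this
  apply hexp.mono' (F_aesm hl)
  filter_upwards [ae_restrict_mem measurableSet_Ioi] with x hx
  obtain ⟨h1, h2⟩ := F_le_one_sided hl hx
  rw [Real.norm_eq_abs, abs_of_nonneg h2]
  exact h1

private lemma p_upper {l : ℝ} (hl : 0 < l) :
    (∫ x in Ioi (0:ℝ), Real.exp (-x) * ∏' i : ℕ, (1 - Real.exp (-x - l * ((i:ℝ) + 1))) ^ 2)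
      ≤ 1 / (2 * (Real.exp (-l) / (1 - Real.exp (-l)))) := by
  set c := 2 * (Real.exp (-l) / (1 - Real.exp (-l))) with hc
  have hq0 : 0 < Real.exp (-l) := Real.exp_pos _
  have hq1 : Real.exp (-l) < 1 := Real.exp_lt_one_iff.2 (by linarith)
  have hcpos : 0 < c := mul_pos two_pos (div_pos hq0 (by linarith))
  obtain ⟨hint_u, hval⟩ := integral_exp_exp hcpos 0
  have hle : ∀ x ∈ Ioi (0:ℝ),
      Real.exp (-x) * ∏' i : ℕ, (1 - Real.exp (-x - l * ((i:ℝ) + 1))) ^ 2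
        ≤ Real.exp (-x) * Real.exp (-(c * Real.exp (-x))) := by
    intro x hx
    obtain ⟨S, _, hP, hSle, _⟩ := point_facts hl hx
    rw [hP.tprod_eq]
    have key : Real.exp S ^ 2 ≤ Real.exp (-(c * Real.exp (-x))) := by
      rw [sq, ← Real.exp_add]
      apply Real.exp_le_exp.2
      rw [hc]
      nlinarith [hSle]
    exact mul_le_mul_of_nonneg_left key (Real.exp_pos _).le
  calc (∫ x in Ioi (0:ℝ), Real.exp (-x) * ∏' i : ℕ, (1 - Real.exp (-x - l * ((i:ℝ) + 1))) ^ 2)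
      ≤ ∫ x in Ioi (0:ℝ), Real.exp (-x) * Real.exp (-(c * Real.exp (-x))) :=
        setIntegral_mono_on (F_integrableOn hl) hint_u measurableSet_Ioi hle
    _ = (1 - Real.exp (-(c * Real.exp (-(0:ℝ))))) / c := hval
    _ ≤ 1 / c := by
        have h := Real.exp_pos (-(c * Real.exp (-(0:ℝ))))
        exact (div_le_div_iff_of_pos_right hcpos).2 (by linarith)

private lemma p_lower {l δ : ℝ} (hl : 0 < l) (hδ0 : 0 < δ) (hδ : δ ≤ 1/2) :
    (1 - Real.exp (-((1 + 2*δ) * (2 * (Real.exp (-l) / (1 - Real.exp (-l)))) * δ)))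
      / ((1 + 2*δ) * (2 * (Real.exp (-l) / (1 - Real.exp (-l)))))
    ≤ ∫ x in Ioi (0:ℝ),
        Real.exp (-x) * ∏' i : ℕ, (1 - Real.exp (-x - l * ((i:ℝ) + 1))) ^ 2 := by
  set c := 2 * (Real.exp (-l) / (1 - Real.exp (-l))) with hc
  have hq0 : 0 < Real.exp (-l) := Real.exp_pos _
  have hq1 : Real.exp (-l) < 1 := Real.exp_lt_one_iff.2 (by linarith)
  have hcpos : 0 < c := mul_pos two_pos (div_pos hq0 (by linarith))
  have hc'pos : 0 < (1 + 2*δ) * c := mul_pos (by linarith) hcpos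
  set L := -Real.log δ with hL
  have hL0 : 0 < L := by
    have := Real.log_neg hδ0 (by linarith)
    simp [hL]; linarith
  have hexpL : Real.exp (-L) = δ := by
    rw [hL, neg_neg, Real.exp_log hδ0]
  obtain ⟨hint_u, hval⟩ := integral_exp_exp hc'pos L
  have hpt : ∀ x ∈ Ioi L,
      Real.exp (-x) * Real.exp (-((1 + 2*δ) * c * Real.exp (-x)))
        ≤ Real.exp (-x) * ∏' i : ℕ, (1 - Real.exp (-x - l * ((i:ℝ) + 1))) ^ 2 := by
    intro x hx
    have hx0 : 0 < x := lt_trans hL0 hx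
    obtain ⟨S, hsum, hP, _, _⟩ := point_facts hl hx0
    rw [hP.tprod_eq]
    have hLx : L < x := hx
    have htδ : Real.exp (-x) ≤ δ := by
      rw [← hexpL]
      exact Real.exp_le_exp.2 (by linarith)
    have hlow := log_tsum_lower (Real.exp_pos (-x)) htδ hδ hδ0 hq0 hq1 hsum
    have key : Real.exp (-((1 + 2*δ) * c * Real.exp (-x))) ≤ Real.exp S ^ 2 := by
      rw [sq, ← Real.exp_add]
      apply Real.exp_le_exp.2
      rw [hc]
      nlinarith [hlow]
    exact mul_le_mul_of_nonneg_left key (Real.exp_pos _).le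
  have h1 : (∫ x in Ioi L, Real.exp (-x) * Real.exp (-((1 + 2*δ) * c * Real.exp (-x))))
      ≤ ∫ x in Ioi L, Real.exp (-x) * ∏' i : ℕ, (1 - Real.exp (-x - l * ((i:ℝ) + 1))) ^ 2 :=
    setIntegral_mono_on hint_u ((F_integrableOn hl).mono_set (Ioi_subset_Ioi hL0.le))
      measurableSet_Ioi hpt
  have hnn : 0 ≤ᵐ[volume.restrict (Ioi (0:ℝ))]
      (fun x => Real.exp (-x) * ∏' i : ℕ, (1 - Real.exp (-x - l * ((i:ℝ) + 1))) ^ 2) := by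
    filter_upwards [ae_restrict_mem measurableSet_Ioi] with x hx
    exact (F_le_one_sided hl hx).2
  have h2 : (∫ x in Ioi L, Real.exp (-x) * ∏' i : ℕ, (1 - Real.exp (-x - l * ((i:ℝ) + 1))) ^ 2)
      ≤ ∫ x in Ioi (0:ℝ), Real.exp (-x) * ∏' i : ℕ, (1 - Real.exp (-x - l * ((i:ℝ) + 1))) ^ 2 :=
    setIntegral_mono_set (F_integrableOn hl) hnn
      (HasSubset.Subset.eventuallyLE (Ioi_subset_Ioi hL0.le))
  rw [hexpL] at hval
  rw [hval] at h1
  linarith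

private lemma tendsto_A : Tendsto (fun l : ℝ => (1 - Real.exp (-l)) / l) (𝓝[>] 0) (𝓝 1) := by
  have hd : HasDerivAt (fun x : ℝ => 1 - Real.exp (-x)) 1 0 := by
    have h1 : HasDerivAt (fun x : ℝ => -x) (-1) (0:ℝ) := (hasDerivAt_id (0:ℝ)).neg
    have h2 := h1.exp.const_sub (1:ℝ)
    simpa using h2
  rw [hasDerivAt_iff_tendsto_slope] at hd
  have h3 := hd.mono_left (nhdsWithin_mono 0 (fun x hx => ne_of_gt hx))
  refine h3.congr (fun l => ?_)
  simp [slope_def_field]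

private lemma tendsto_cl :
    Tendsto (fun l : ℝ => 1 / (2 * (Real.exp (-l) / (1 - Real.exp (-l))) * l))
      (𝓝[>] 0) (𝓝 (1/2)) := by
  have hB : Tendsto (fun l : ℝ => 1 / (2 * Real.exp (-l))) (𝓝[>] 0) (𝓝 (1/2)) := by
    have hcont : ContinuousAt (fun l : ℝ => 1 / (2 * Real.exp (-l))) 0 := by
      apply ContinuousAt.div continuousAt_const (by fun_prop)
      norm_num [Real.exp_zero]
    have := hcont.tendsto.mono_left (nhdsWithin_le_nhds : 𝓝[>] (0:ℝ) ≤ 𝓝 0)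
    simpa using this
  have h := tendsto_A.mul hB
  rw [show (1:ℝ) * (1/2) = 1/2 by norm_num] at h
  refine h.congr' ?_
  filter_upwards [self_mem_nhdsWithin] with l hl
  have hl0 : (0:ℝ) < l := hl
  have he : (0:ℝ) < Real.exp (-l) := Real.exp_pos _
  have h1 : Real.exp (-l) < 1 := Real.exp_lt_one_iff.2 (by linarith)
  have hne : (1:ℝ) - Real.exp (-l) ≠ 0 := ne_of_gt (by linarith)
  field_simp
  try ring
  try tauto

private lemma tendsto_c_atTop :
    Tendsto (fun l : ℝ => 2 * (Real.exp (-l) / (1 - Real.exp (-l)))) (𝓝[>] 0) atTop := by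
  have h1 : Tendsto (fun l : ℝ => 1 - Real.exp (-l)) (𝓝[>] 0) (𝓝[>] 0) := by
    rw [tendsto_nhdsWithin_iff]
    constructor
    · have hcont : ContinuousAt (fun l : ℝ => 1 - Real.exp (-l)) 0 := by fun_prop
      have := hcont.tendsto.mono_left (nhdsWithin_le_nhds : 𝓝[>] (0:ℝ) ≤ 𝓝 0)
      simpa using this
    · filter_upwards [self_mem_nhdsWithin] with l hl
      have hl0 : (0:ℝ) < l := hl
      have : Real.exp (-l) < 1 := Real.exp_lt_one_iff.2 (by linarith)
      exact mem_Ioi.2 (by linarith)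
  have h2 : Tendsto (fun l : ℝ => (1 - Real.exp (-l))⁻¹) (𝓝[>] 0) atTop :=
    tendsto_inv_nhdsGT_zero.comp h1
  have h3 : Tendsto (fun l : ℝ => 2 * Real.exp (-l)) (𝓝[>] 0) (𝓝 2) := by
    have hcont : ContinuousAt (fun l : ℝ => 2 * Real.exp (-l)) 0 := by fun_prop
    have := hcont.tendsto.mono_left (nhdsWithin_le_nhds : 𝓝[>] (0:ℝ) ≤ 𝓝 0)
    simpa using this
  have h4 := Filter.Tendsto.pos_mul_atTop two_pos h3 h2
  refine h4.congr (fun l => ?_)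
  rw [div_eq_mul_inv, mul_assoc]


/-- With `p(λ) = ∫₀^∞ e^{-x} ∏_{i=1}^∞ (1 - e^{-x-λi})² dx`, one has
`p(λ)/λ → 1/2` as `λ → 0⁺`. -/
theorem tendsto_prob_div_lambda :
    Filter.Tendsto
      (fun l : ℝ =>
        (∫ x in Set.Ioi (0 : ℝ),
          Real.exp (-x) * ∏' i : ℕ, (1 - Real.exp (-x - l * ((i : ℝ) + 1))) ^ 2) / l)
      (nhdsWithin 0 (Set.Ioi 0)) (nhds (1 / 2)) := by
  rw [tendsto_order]
  constructor
  · intro b hb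
    -- choose δ
    have hten : Tendsto (fun δ : ℝ => 1 / (2 * (1 + 2*δ))) (𝓝[>] 0) (𝓝 (1/2)) := by
      have hcont : ContinuousAt (fun δ : ℝ => 1 / (2 * (1 + 2*δ))) 0 := by
        apply ContinuousAt.div continuousAt_const (by fun_prop)
        norm_num
      have := hcont.tendsto.mono_left (nhdsWithin_le_nhds : 𝓝[>] (0:ℝ) ≤ 𝓝 0)
      simpa using this
    have hIoc : Ioc (0:ℝ) (1/2) ∈ 𝓝[>] (0:ℝ) :=
      Ioc_mem_nhdsGT_of_mem ⟨le_refl 0, by norm_num⟩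
    obtain ⟨δ, hδlt, hδmem⟩ := ((hten.eventually_const_lt hb).and hIoc).exists
    have hδ0 : 0 < δ := hδmem.1
    have hδh : δ ≤ 1/2 := hδmem.2
    -- the lower bound function tends to 1/(2*(1+2δ))
    have hnum : Tendsto (fun l : ℝ =>
        1 - Real.exp (-((1 + 2*δ) * (2 * (Real.exp (-l) / (1 - Real.exp (-l)))) * δ)))
        (𝓝[>] 0) (𝓝 1) := by
      have harg : Tendsto (fun l : ℝ =>
          (1 + 2*δ) * (2 * (Real.exp (-l) / (1 - Real.exp (-l)))) * δ) (𝓝[>] 0) atTop :=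
        (tendsto_c_atTop.const_mul_atTop (by linarith)).atTop_mul_const hδ0
      have hexp0 := tendsto_exp_neg_atTop_nhds_zero.comp harg
      have := (tendsto_const_nhds (x := (1:ℝ))).sub hexp0
      simpa [Function.comp] using this
    have hden : Tendsto (fun l : ℝ =>
        1 / ((1 + 2*δ) * (2 * (Real.exp (-l) / (1 - Real.exp (-l)))) * l))
        (𝓝[>] 0) (𝓝 (1 / (1 + 2*δ) * (1/2))) := by
      have := (tendsto_const_nhds (x := 1/(1+2*δ)) (f := 𝓝[>] (0:ℝ))).mul tendsto_cl
      refine this.congr' ?_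
      filter_upwards [self_mem_nhdsWithin] with l hl
      have hl0 : (0:ℝ) < l := hl
      have he : (0:ℝ) < Real.exp (-l) := Real.exp_pos _
      have h1 : Real.exp (-l) < 1 := Real.exp_lt_one_iff.2 (by linarith)
      have hne : (1:ℝ) - Real.exp (-l) ≠ 0 := ne_of_gt (by linarith)
      have hδne : (1:ℝ) + 2*δ ≠ 0 := by positivity
      field_simp
      try ring
      try tauto
    have hLo := hnum.mul hden
    rw [show (1:ℝ) * (1/(1+2*δ) * (1/2)) = 1/(2*(1+2*δ)) by
      rw [one_mul, div_mul_div_comm, one_mul, mul_comm]] at hLo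
    filter_upwards [self_mem_nhdsWithin, hLo.eventually_const_lt hδlt] with l hl hlt
    have hl0 : (0:ℝ) < l := hl
    have hp := p_lower hl0 hδ0 hδh
    have h3 := (div_le_div_iff_of_pos_right hl0).2 hp
    rw [div_div] at h3
    rw [mul_one_div] at hlt
    linarith
  · intro b hb
    filter_upwards [self_mem_nhdsWithin, tendsto_cl.eventually_lt_const hb] with l hl hlt
    have hl0 : (0:ℝ) < l := hl
    have h1 := p_upper hl0
    have h2 := (div_le_div_iff_of_pos_right hl0).2 h1
    rw [div_div] at h2
    linarith
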